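/- Let E and F be complete real normed vector spaces, let h : ℝ → E and g : E → F both be three times continuously differentiable (ContDiff of order 3). Then for every t ∈ ℝ, the third iterated derivative of g ∘ h satisfies (g ∘ h)‴(t) = D³g(h(t))[h′(t), h′(t), h′(t)] + 3·D²g(h(t))[h″(t), h′(t)] + Dg(h(t))[h‴(t)]. -/

import Mathlib

open Fin Function

lemma iteratedFDeriv_three_apply'
    {E F : Type*} [NormedAddCommGroup E] [NormedSpace ℝ E]
    [NormedAddCommGroup F] [NormedSpace ℝ F] (f : E → F) (z : E) (m : Fin 3 → E) :
    iteratedFDeriv ℝ 3 f z m = fderiv ℝ (fderiv ℝ (fderiv ℝ f)) z (m 0) (m 1) (m 2) := by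
  rw [iteratedFDeriv_succ_apply_right, iteratedFDeriv_two_apply]
  simp [Fin.init, Fin.last]

set_option maxHeartbeats 1000000 in
theorem faa_di_bruno_third_order
    {E F : Type*} [NormedAddCommGroup E] [NormedSpace ℝ E] [CompleteSpace E]
    [NormedAddCommGroup F] [NormedSpace ℝ F] [CompleteSpace F]
    (h : ℝ → E) (g : E → F)
    (hh : ContDiff ℝ 3 h) (hg : ContDiff ℝ 3 g) :
    ∀ t : ℝ,
      iteratedDeriv 3 (g ∘ h) t =
        iteratedFDeriv ℝ 3 g (h t) ![deriv h t, deriv h t, deriv h t] +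
          (3 : ℝ) • iteratedFDeriv ℝ 2 g (h t) ![iteratedDeriv 2 h t, deriv h t] +
          fderiv ℝ g (h t) (iteratedDeriv 3 h t) := by
  intro t
  set B1 := fderiv ℝ g with hB1def
  set B2 := fderiv ℝ B1 with hB2def
  set B3 := fderiv ℝ B2 with hB3def
  -- smoothness of the derivatives of g
  have hgB1 : ContDiff ℝ 2 B1 := hg.fderiv_right (by norm_num)
  have hgB2 : ContDiff ℝ 1 B2 := hgB1.fderiv_right (by norm_num)
  have hgd : Differentiable ℝ g := hg.differentiable (by norm_num)
  have hB1d : Differentiable ℝ B1 := hgB1.differentiable (by norm_num)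
  have hB2d : Differentiable ℝ B2 := hgB2.differentiable (by norm_num)
  -- smoothness of the derivatives of h
  have hhd : Differentiable ℝ h := hh.differentiable (by norm_num)
  have hh1 : ContDiff ℝ 2 (deriv h) := by
    have := (contDiff_succ_iff_deriv (n := 2)).1 (by exact_mod_cast hh)
    exact this.2.2
  have hh1d : Differentiable ℝ (deriv h) := hh1.differentiable (by norm_num)
  have hh2 : ContDiff ℝ 1 (deriv (deriv h)) := by
    have := (contDiff_succ_iff_deriv (n := 1)).1 (by exact_mod_cast hh1)
    exact this.2.2
  have hh2d : Differentiable ℝ (deriv (deriv h)) := hh2.differentiable (by norm_num)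
  -- derivatives of compositions with h
  have dB1h : ∀ s : ℝ, HasDerivAt (fun s => B1 (h s)) (B2 (h s) (deriv h s)) s := fun s =>
    (hB1d (h s)).hasFDerivAt.comp_hasDerivAt s (hhd s).hasDerivAt
  have dB2h : ∀ s : ℝ, HasDerivAt (fun s => B2 (h s)) (B3 (h s) (deriv h s)) s := fun s =>
    (hB2d (h s)).hasFDerivAt.comp_hasDerivAt (l := B2) s (hhd s).hasDerivAt
  -- first derivative
  have e1 : deriv (g ∘ h) = fun s => B1 (h s) (deriv h s) := by
    funext s
    exact ((hgd (h s)).hasFDerivAt.comp_hasDerivAt s (hhd s).hasDerivAt).deriv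
  -- second derivative
  have e2 : deriv (fun s => B1 (h s) (deriv h s)) =
      fun s => B2 (h s) (deriv h s) (deriv h s) + B1 (h s) (deriv (deriv h) s) := by
    funext s
    rw [deriv_clm_apply (dB1h s).differentiableAt (hh1d s), (dB1h s).deriv]
  -- pieces for the third derivative
  have dc : ∀ s : ℝ, DifferentiableAt ℝ (fun s => B2 (h s) (deriv h s)) s := fun s =>
    (dB2h s).differentiableAt.clm_apply (hh1d s)
  have dcderiv : ∀ s : ℝ, deriv (fun s => B2 (h s) (deriv h s)) s =
      B3 (h s) (deriv h s) (deriv h s) + B2 (h s) (deriv (deriv h) s) := fun s => by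
    rw [deriv_clm_apply (dB2h s).differentiableAt (hh1d s), (dB2h s).deriv]
  have e3 : deriv (fun s => B2 (h s) (deriv h s) (deriv h s) + B1 (h s) (deriv (deriv h) s)) t =
      (B3 (h t) (deriv h t) (deriv h t) (deriv h t) + B2 (h t) (deriv (deriv h) t) (deriv h t))
        + B2 (h t) (deriv h t) (deriv (deriv h) t)
        + (B2 (h t) (deriv h t) (deriv (deriv h) t) + B1 (h t) (deriv (deriv (deriv h)) t)) := by
    rw [deriv_fun_add ((dc t).clm_apply (hh1d t)) ((dB1h t).differentiableAt.clm_apply (hh2d t)),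
      deriv_clm_apply (dc t) (hh1d t), dcderiv t,
      deriv_clm_apply (dB1h t).differentiableAt (hh2d t), (dB1h t).deriv]
    simp [add_assoc]
  -- symmetry of the second derivative
  have hsymm : B2 (h t) (deriv h t) (deriv (deriv h) t)
      = B2 (h t) (deriv (deriv h) t) (deriv h t) :=
    (hg.contDiffAt.isSymmSndFDerivAt (by norm_num)) _ _
  -- put everything together
  have key : iteratedDeriv 3 (g ∘ h) t = deriv (deriv (deriv (g ∘ h))) t := by
    simp [iteratedDeriv_succ, iteratedDeriv_zero]
  rw [key, e1, e2, e3,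
    iteratedFDeriv_three_apply', iteratedFDeriv_two_apply,
    show iteratedDeriv 2 h = deriv (deriv h) by simp [iteratedDeriv_succ, iteratedDeriv_zero],
    show iteratedDeriv 3 h = deriv (deriv (deriv h)) by simp [iteratedDeriv_succ, iteratedDeriv_zero]]
  simp only [Matrix.cons_val_zero, Matrix.cons_val_one, Matrix.head_cons, Matrix.cons_val_two,
    Matrix.tail_cons]
  rw [hsymm, ← hB1def, ← hB2def, ← hB3def]
  module
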